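/- arXiv:2204.12249 — 5 statements merged into one kernel-verified Lean document; each statement's English description precedes it below -/
import Mathlib

section
/- Let A be a commutative ring and R : ℤ × ℤ → A a function with R(p,q) = 0 whenever p ≤ 0 or q ≤ 0. In the ring of formal Laurent series over A in a variable u, set ϑ₀ := 1 and, for each integer q ≥ 1, ϑ_q := u^{−q} + Σ_{p≥1} R(p,q)·u^p. Assume that for every integer k ≥ 1 the multiplication rule ϑ₁ · ϑ_k = ϑ_{k+1} + Σ_{r=0}^{k} R(k−r,1)·ϑ_r + Σ_{r=0}^{k} R(1−r,k)·ϑ_r holds. Then R(1,n) = n·R(n,1) for every integer n ≥ 1. -/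
open HahnSeries Finset

namespace Statement0Aux

variable {A : Type*} [CommRing A]

/-- The Euler operator `u d/du` on Laurent series: multiplies the `n`-th coefficient by `n`. -/
noncomputable def eulerD (x : HahnSeries ℤ A) : HahnSeries ℤ A where
  coeff n := n • x.coeff n
  isPWO_support' := x.isPWO_support.mono (fun n hn => by
    simp only [Function.mem_support, ne_eq] at hn ⊢
    intro h
    exact hn (by rw [h, smul_zero]))

@[simp] lemma eulerD_coeff (x : HahnSeries ℤ A) (n : ℤ) :
    (eulerD x).coeff n = n • x.coeff n := rfl

lemma eulerD_support (x : HahnSeries ℤ A) : (eulerD x).support ⊆ x.support := by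
  intro n hn
  simp only [HahnSeries.mem_support, eulerD_coeff, ne_eq] at hn ⊢
  intro h
  exact hn (by rw [h, smul_zero])

lemma eulerD_add (x y : HahnSeries ℤ A) : eulerD (x + y) = eulerD x + eulerD y := by
  ext n
  simp [smul_add]

lemma eulerD_single (a : ℤ) (c : A) : eulerD (single a c) = single a (a • c) := by
  ext n
  by_cases h : n = a
  · subst h; simp
  · simp [HahnSeries.coeff_single_of_ne h]

lemma eulerD_mul (x y : HahnSeries ℤ A) :
    eulerD (x * y) = eulerD x * y + x * eulerD y := by
  ext n
  rw [HahnSeries.coeff_add, eulerD_coeff, HahnSeries.coeff_mul,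
    HahnSeries.coeff_mul_left' x.isPWO_support (eulerD_support x),
    HahnSeries.coeff_mul_right' y.isPWO_support (eulerD_support y),
    Finset.smul_sum, ← Finset.sum_add_distrib]
  refine Finset.sum_congr rfl (fun ij hij => ?_)
  obtain ⟨-, -, hsum⟩ := Finset.mem_addAntidiagonal.mp hij
  rw [← hsum, eulerD_coeff, eulerD_coeff, add_smul, smul_mul_assoc, mul_smul_comm]

lemma nsmul_coeff (k : ℕ) (z : HahnSeries ℤ A) (n : ℤ) :
    (k • z).coeff n = k • z.coeff n := by
  induction k with
  | zero => simp
  | succ m ih => rw [succ_nsmul, succ_nsmul, HahnSeries.coeff_add, ih]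

lemma eulerD_pow (x : HahnSeries ℤ A) (m : ℕ) :
    eulerD (x ^ (m + 1)) = HahnSeries.C ((m : A) + 1) * (x ^ m * eulerD x) := by
  induction m with
  | zero => simp
  | succ m ih =>
    have hC : (HahnSeries.C (((m + 1 : ℕ) : A) + 1) : HahnSeries ℤ A)
        = HahnSeries.C ((m : A) + 1) + 1 := by
      rw [← map_one (HahnSeries.C (R := A) (Γ := ℤ)), ← map_add]
      congr 1
      push_cast
      ring
    rw [pow_succ, eulerD_mul, ih, hC]
    ring

/-- Over a torsion-free ring we can divide by `m+1`. The universal case. -/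
lemma coeff_zero_pow_mul_eulerD_of_domain {B : Type*} [CommRing B] [IsDomain B] [CharZero B]
    (y : HahnSeries ℤ B) (m : ℕ) : (y ^ m * eulerD y).coeff 0 = 0 := by
  have h1 : (eulerD (y ^ (m + 1))).coeff 0 = 0 := by simp
  rw [eulerD_pow, HahnSeries.C_apply, HahnSeries.coeff_single_zero_mul] at h1
  have hc : ((m : B) + 1) ≠ 0 := by
    have h := Nat.cast_ne_zero (R := B).mpr (Nat.succ_ne_zero m)
    push_cast at h
    exact h
  exact (mul_eq_zero.mp h1).resolve_left hc

/-- `Res (f^m · u f') = 0` integrally, by base change from the universal (torsion-free) case. -/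
lemma coeff_zero_pow_mul_eulerD (x : HahnSeries ℤ A) (m : ℕ) :
    (x ^ m * eulerD x).coeff 0 = 0 := by
  classical
  set B := MvPolynomial ℤ ℤ with hB
  let y : HahnSeries ℤ B :=
    { coeff := fun n => if n ∈ x.support then MvPolynomial.X n else 0,
      isPWO_support' := x.isPWO_support.mono (fun n hn => by
        simp only [Function.mem_support, ne_eq] at hn
        by_contra h
        simp [h] at hn) }
  have hycoeff : ∀ n, y.coeff n = if n ∈ x.support then MvPolynomial.X n else 0 := fun _ => rfl
  let ψ : B →ₙ+* A :=
    (MvPolynomial.eval₂Hom (Int.castRingHom A) (fun n => x.coeff n)).toNonUnitalRingHom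
  have hψ : ∀ b : B, ψ b = MvPolynomial.eval₂ (Int.castRingHom A) (fun n => x.coeff n) b :=
    fun _ => rfl
  have hyx : y.map ψ = x := by
    ext n
    rw [HahnSeries.map_coeff, hycoeff]
    by_cases h : n ∈ x.support
    · rw [if_pos h, hψ, MvPolynomial.eval₂_X]
    · rw [if_neg h, map_zero]
      simp only [HahnSeries.mem_support, not_not] at h
      exact h.symm
  have hDmap : ∀ z : HahnSeries ℤ B, (eulerD z).map ψ = eulerD (z.map ψ) := by
    intro z
    ext n
    rw [HahnSeries.map_coeff, eulerD_coeff, eulerD_coeff, HahnSeries.map_coeff, map_zsmul]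
  have hmulmap : ∀ z w : HahnSeries ℤ B, (z * w).map ψ = z.map ψ * w.map ψ := by
    intro z w
    exact HahnSeries.map_mul ψ
  have honemap : (1 : HahnSeries ℤ B).map ψ = 1 := by
    ext n
    rw [HahnSeries.map_coeff]
    by_cases h : n = 0
    · subst h
      rw [HahnSeries.coeff_one, HahnSeries.coeff_one, if_pos rfl, if_pos rfl]
      exact map_one (MvPolynomial.eval₂Hom (Int.castRingHom A) (fun n => x.coeff n))
    · rw [HahnSeries.coeff_one, HahnSeries.coeff_one, if_neg h, if_neg h, map_zero]
  have hpowmap : ∀ (z : HahnSeries ℤ B) (k : ℕ), (z ^ k).map ψ = (z.map ψ) ^ k := by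
    intro z k
    induction k with
    | zero => rw [pow_zero, pow_zero, honemap]
    | succ j ih => rw [pow_succ, pow_succ, hmulmap, ih]
  have hkey : (y ^ m * eulerD y).coeff 0 = 0 :=
    coeff_zero_pow_mul_eulerD_of_domain y m
  calc (x ^ m * eulerD x).coeff 0
      = ((y ^ m * eulerD y).map ψ).coeff 0 := by
        rw [hmulmap, hpowmap, hDmap, hyx]
    _ = ψ ((y ^ m * eulerD y).coeff 0) := by rw [HahnSeries.map_coeff]
    _ = 0 := by rw [hkey, map_zero]

/-- `Res (P(f) · u f') = 0` for any polynomial `P` in `f`. -/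
lemma coeff_zero_adjoin_mul_eulerD (f : HahnSeries ℤ A) (x : HahnSeries ℤ A)
    (hx : x ∈ Algebra.adjoin A {f}) : (x * eulerD f).coeff 0 = 0 := by
  rw [Algebra.adjoin_singleton_eq_range_aeval, AlgHom.mem_range] at hx
  obtain ⟨P, rfl⟩ := hx
  induction P using Polynomial.induction_on' with
  | add p q hp hq =>
    rw [map_add, add_mul, HahnSeries.coeff_add, hp, hq, add_zero]
  | monomial k a =>
    have halg : algebraMap A (HahnSeries ℤ A) a = HahnSeries.single (0 : ℤ) a := by
      rw [HahnSeries.algebraMap_apply',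
        show algebraMap A (PowerSeries A) a = PowerSeries.C (R := A) a from rfl,
        HahnSeries.ofPowerSeries_C, HahnSeries.C_apply]
    rw [Polynomial.aeval_monomial, mul_assoc, halg, HahnSeries.coeff_single_zero_mul,
      coeff_zero_pow_mul_eulerD, mul_zero]

lemma ofPS_coeff_neg (ψ : PowerSeries A) (n : ℤ) (hn : n < 0) :
    (HahnSeries.ofPowerSeries ℤ A ψ).coeff n = 0 := by
  rw [HahnSeries.ofPowerSeries_apply]
  apply HahnSeries.embDomain_notin_range
  rintro ⟨k, hk⟩
  change ((k : ℤ)) = n at hk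
  have : (0 : ℤ) ≤ (k : ℤ) := Int.natCast_nonneg k
  omega

/-- A product of two series supported in positive degrees has zero constant coefficient. -/
lemma coeff_zero_mul_of_pos_support (x y : HahnSeries ℤ A)
    (hx : ∀ i : ℤ, i ≤ 0 → x.coeff i = 0) (hy : ∀ j : ℤ, j ≤ 0 → y.coeff j = 0) :
    (x * y).coeff 0 = 0 := by
  rw [HahnSeries.coeff_mul]
  apply Finset.sum_eq_zero
  intro ij hij
  obtain ⟨h1, h2, hsum⟩ := Finset.mem_addAntidiagonal.mp hij
  exfalso
  have hx1 : ¬ ij.1 ≤ 0 := fun h => h1 (hx ij.1 h)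
  have hy1 : ¬ ij.2 ≤ 0 := fun h => h2 (hy ij.2 h)
  omega

end Statement0Aux

open Statement0Aux

/-- Let `A` be a commutative ring and `R : ℤ × ℤ → A` a function with
`R (p, q) = 0` whenever `p ≤ 0` or `q ≤ 0`.  In the ring of formal Laurent series over `A`
(in the variable `u`), set `ϑ₀ := 1` and, for `q ≥ 1`,
`ϑ_q := u^(-q) + ∑_{p ≥ 1} R (p, q) • u^p`.  Assume the multiplication rule
`ϑ₁ * ϑ_k = ϑ_{k+1} + ∑_{r=0}^{k} R (k - r, 1) • ϑ_r + ∑_{r=0}^{k} R (1 - r, k) • ϑ_r`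
for every `k ≥ 1`.  Then `R (1, n) = n • R (n, 1)` for every integer `n ≥ 1`. -/
theorem statement0 (A : Type*) [CommRing A] (R : ℤ × ℤ → A)
    (hvanish : ∀ p q : ℤ, p ≤ 0 ∨ q ≤ 0 → R (p, q) = 0)
    (θ : ℤ → LaurentSeries A)
    (hθ0 : θ 0 = 1)
    (hθ : ∀ q : ℤ, 1 ≤ q →
      θ q = HahnSeries.single (-q) (1 : A) +
        HahnSeries.ofPowerSeries ℤ A
          (PowerSeries.mk fun p : ℕ => if 1 ≤ p then R ((p : ℤ), q) else 0))
    (hmul : ∀ k : ℤ, 1 ≤ k →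
      θ 1 * θ k = θ (k + 1)
        + (∑ r ∈ Finset.Icc (0 : ℤ) k, R (k - r, 1) • θ r)
        + ∑ r ∈ Finset.Icc (0 : ℤ) k, R (1 - r, k) • θ r) :
    ∀ n : ℤ, 1 ≤ n → R (1, n) = n • R (n, 1) := by
  classical
  -- notation for the "tail" of θ_q
  set T : ℤ → LaurentSeries A := fun q =>
    HahnSeries.ofPowerSeries ℤ A
      (PowerSeries.mk fun p : ℕ => if 1 ≤ p then R ((p : ℤ), q) else 0) with hT
  -- coefficients of the tail
  have Tcoeff_pos : ∀ q n : ℤ, 1 ≤ n → (T q).coeff n = R (n, q) := by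
    intro q n hn
    have hk : ((n.toNat : ℕ) : ℤ) = n := Int.toNat_of_nonneg (by omega)
    rw [hT, ← hk, HahnSeries.ofPowerSeries_apply_coeff, PowerSeries.coeff_mk, if_pos (by omega),
      hk]
  have Tcoeff_nonpos : ∀ q n : ℤ, n ≤ 0 → (T q).coeff n = 0 := by
    intro q n hn
    rcases lt_or_eq_of_le hn with h | h
    · exact ofPS_coeff_neg _ n h
    · subst h
      have : ((0 : ℕ) : ℤ) = (0 : ℤ) := rfl
      rw [hT, ← this, HahnSeries.ofPowerSeries_apply_coeff, PowerSeries.coeff_mk]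
      simp
  -- all θ_r for 0 ≤ r lie in the subalgebra generated by θ 1
  have hadj : ∀ n : ℤ, 0 ≤ n → θ n ∈ Algebra.adjoin A {θ 1} := by
    have key : ∀ k : ℤ, 1 ≤ k → ∀ r : ℤ, 0 ≤ r → r ≤ k → θ r ∈ Algebra.adjoin A {θ 1} := by
      intro k hk
      refine Int.leInduction (m := 1)
        (motive := fun k _ => ∀ r : ℤ, 0 ≤ r → r ≤ k → θ r ∈ Algebra.adjoin A {θ 1}) ?_ ?_ k hk
      · intro r h0 h1
        interval_cases r
        · rw [hθ0]; exact one_mem _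
        · exact Algebra.subset_adjoin rfl
      · intro k hk ih r h0 hr
        rcases lt_or_eq_of_le hr with h | h
        · exact ih r h0 (by omega)
        · subst h
          have hexp : θ (k + 1) = θ 1 * θ k
              - (∑ r ∈ Finset.Icc (0 : ℤ) k, R (k - r, 1) • θ r)
              - ∑ r ∈ Finset.Icc (0 : ℤ) k, R (1 - r, k) • θ r := by
            rw [hmul k hk]; ring
          rw [hexp]
          apply sub_mem
          apply sub_mem
          · exact mul_mem (Algebra.subset_adjoin rfl) (ih k (by omega) le_rfl)
          all_goals
            apply sum_mem
            intro r hrmem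
            obtain ⟨hr0, hrk⟩ := Finset.mem_Icc.mp hrmem
            rw [← HahnSeries.C_mul_eq_smul, HahnSeries.C_apply,
              show ∀ c : A, HahnSeries.single (0 : ℤ) c = algebraMap A (LaurentSeries A) c from
                fun c => by
                  rw [HahnSeries.algebraMap_apply',
                    show algebraMap A (PowerSeries A) c = PowerSeries.C (R := A) c from rfl,
                    HahnSeries.ofPowerSeries_C, HahnSeries.C_apply]]
            exact mul_mem (Subalgebra.algebraMap_mem _ _) (ih r hr0 hrk)
    intro n hn
    rcases lt_or_eq_of_le hn with h | h
    · exact key n (by omega) n hn le_rfl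
    · rw [← h, hθ0]; exact one_mem _
  -- the main computation
  intro n hn
  have hvan : (θ n * eulerD (θ 1)).coeff 0 = 0 :=
    coeff_zero_adjoin_mul_eulerD (θ 1) (θ n) (hadj n (by omega))
  -- expand the left-hand side
  have hθn : θ n = HahnSeries.single (-n) (1 : A) + T n := hθ n hn
  have hθ1 : θ 1 = HahnSeries.single (-1 : ℤ) (1 : A) + T 1 := hθ 1 le_rfl
  have hD1 : eulerD (θ 1) = HahnSeries.single (-1 : ℤ) (-1 : A) + eulerD (T 1) := by
    rw [hθ1, eulerD_add, eulerD_single]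
    norm_num
  -- the four cross terms
  have e1 : (HahnSeries.single (-n) (1 : A) * HahnSeries.single (-1 : ℤ) (-1 : A)).coeff 0
      = 0 := by
    rw [HahnSeries.single_mul_single]
    apply HahnSeries.coeff_single_of_ne
    omega
  have e2 : (HahnSeries.single (-n) (1 : A) * eulerD (T 1)).coeff 0 = n • R (n, 1) := by
    have h := HahnSeries.coeff_single_mul_add (r := (1 : A)) (x := eulerD (T 1))
      (a := n) (b := -n)
    rw [add_neg_cancel] at h
    rw [h, one_mul, eulerD_coeff, Tcoeff_pos 1 n hn]
  have e3 : (T n * HahnSeries.single (-1 : ℤ) (-1 : A)).coeff 0 = -R (1, n) := by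
    have h := HahnSeries.coeff_mul_single_add (r := (-1 : A)) (x := T n)
      (a := 1) (b := -1)
    rw [add_neg_cancel] at h
    rw [h, Tcoeff_pos n 1 le_rfl, mul_neg_one]
  have e4 : (T n * eulerD (T 1)).coeff 0 = 0 := by
    apply coeff_zero_mul_of_pos_support
    · intro i hi; exact Tcoeff_nonpos n i hi
    · intro j hj
      rw [eulerD_coeff]
      rcases lt_or_eq_of_le hj with h | h
      · rw [Tcoeff_nonpos 1 j hj, smul_zero]
      · subst h; rw [zero_smul]
  have hexpand : (θ n * eulerD (θ 1)).coeff 0 = n • R (n, 1) - R (1, n) := by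
    rw [hθn, hD1, add_mul, mul_add, mul_add, HahnSeries.coeff_add, HahnSeries.coeff_add,
      HahnSeries.coeff_add, e1, e2, e3, e4]
    ring
  rw [hexpand] at hvan
  exact (sub_eq_zero.mp hvan).symm
end

section
/- Let A be a commutative ring and R : ℤ × ℤ → A a function with R(p,q) = 0 whenever p ≤ 0 or q ≤ 0. In the ring of formal Laurent series over A in a variable u, set ϑ₀ := 1 and, for each integer q ≥ 1, ϑ_q := u^{−q} + Σ_{p≥1} R(p,q)·u^p. Fix an integer k ≥ 1 and assume the multiplication rule ϑ₁ · ϑ_k = ϑ_{k+1} + Σ_{r=0}^{k} R(k−r,1)·ϑ_r + Σ_{r=0}^{k} R(1−r,k)·ϑ_r. Then for every integer n > k the following relation holds: R(n−k, k+1) + Σ_{r=1}^{k−1} R(k−r,1)·R(n−k,r) = R(n−k+1, k) + R(n,1) + Σ_{a=1}^{n−k−1} R(a,1)·R(n−k−a, k). -/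
/-- coefficient hom -/
def coeffHom (A : Type*) [CommRing A] (m : ℤ) : HahnSeries ℤ A →+ A where
  toFun x := x.coeff m
  map_zero' := rfl
  map_add' x y := by simp [HahnSeries.coeff_add]

lemma Fcoeff {A : Type*} [CommRing A] (g : ℤ → A) (m : ℤ) (hm : 1 ≤ m) :
    (HahnSeries.ofPowerSeries ℤ A
      (PowerSeries.mk fun p : ℕ => if 1 ≤ p then g p else 0)).coeff m = g m := by
  have h1 : m = ((m.toNat : ℕ) : ℤ) := by omega
  rw [h1, HahnSeries.ofPowerSeries_apply_coeff, PowerSeries.coeff_mk, if_pos (by omega)]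

lemma sum_anti {A : Type*} [CommRing A] (g h : ℤ → A) (m : ℤ) (hm : 1 ≤ m)
    (hg : ∀ a : ℤ, a ≤ 0 → g a = 0) (hh : ∀ a : ℤ, a ≤ 0 → h a = 0) :
    (∑ ij ∈ Finset.HasAntidiagonal.antidiagonal m.toNat,
      (if 1 ≤ ij.1 then g (ij.1 : ℤ) else 0) * (if 1 ≤ ij.2 then h (ij.2 : ℤ) else 0))
    = ∑ a ∈ Finset.Icc (1 : ℤ) (m - 1), g a * h (m - a) := by
  have step1 : (∑ ij ∈ Finset.HasAntidiagonal.antidiagonal m.toNat,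
      (if 1 ≤ ij.1 then g (ij.1 : ℤ) else 0) * (if 1 ≤ ij.2 then h (ij.2 : ℤ) else 0))
      = ∑ a ∈ Finset.Icc (0 : ℤ) m, g a * h (m - a) := by
    refine Finset.sum_nbij' (i := fun ij => (ij.1 : ℤ)) (j := fun a => (a.toNat, (m - a).toNat))
      ?_ ?_ ?_ ?_ ?_
    · intro ij hij
      rw [Finset.HasAntidiagonal.mem_antidiagonal] at hij
      simp only [Finset.mem_Icc]
      omega
    · intro a ha
      rw [Finset.mem_Icc] at ha
      rw [Finset.HasAntidiagonal.mem_antidiagonal]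
      dsimp only
      omega
    · intro ij hij
      rw [Finset.HasAntidiagonal.mem_antidiagonal] at hij
      ext <;> simp <;> omega
    · intro a ha
      rw [Finset.mem_Icc] at ha
      dsimp only
      omega
    · intro ij hij
      rw [Finset.HasAntidiagonal.mem_antidiagonal] at hij
      have h2 : m - (ij.1 : ℤ) = (ij.2 : ℤ) := by omega
      rw [h2]
      by_cases h3 : 1 ≤ ij.1
      · rw [if_pos h3]
        by_cases h4 : 1 ≤ ij.2
        · rw [if_pos h4]
        · have hz : h (ij.2 : ℤ) = 0 := hh _ (by omega)
          simp [if_neg h4, hz]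
      · have hz : g (ij.1 : ℤ) = 0 := hg _ (by omega)
        simp [if_neg h3, hz]
  rw [step1]
  refine (Finset.sum_subset (fun a ha => by simp only [Finset.mem_Icc] at *; omega) ?_).symm
  intro a ha ha'
  simp only [Finset.mem_Icc] at ha ha'
  rcases (by omega : a = 0 ∨ a = m) with h | h
  · rw [h, hg 0 le_rfl, zero_mul]
  · rw [h, sub_self, hh 0 le_rfl, mul_zero]

/-- Let `A` be a commutative ring and `R : ℤ × ℤ → A` a function with
`R (p, q) = 0` whenever `p ≤ 0` or `q ≤ 0`.  In the ring of formal Laurent series over `A`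
set `ϑ₀ := 1` and, for `q ≥ 1`, `ϑ_q := u^(-q) + ∑_{p ≥ 1} R (p, q) • u^p`.
Fix `k ≥ 1` and assume the multiplication rule
`ϑ₁ * ϑ_k = ϑ_{k+1} + ∑_{r=0}^{k} R (k - r, 1) • ϑ_r + ∑_{r=0}^{k} R (1 - r, k) • ϑ_r`.
Then for every integer `n > k`:
`R (n-k, k+1) + ∑_{r=1}^{k-1} R (k-r, 1) * R (n-k, r)
  = R (n-k+1, k) + R (n, 1) + ∑_{a=1}^{n-k-1} R (a, 1) * R (n-k-a, k)`. -/
theorem statement1 (A : Type*) [CommRing A] (R : ℤ × ℤ → A)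
    (hvanish : ∀ p q : ℤ, p ≤ 0 ∨ q ≤ 0 → R (p, q) = 0)
    (θ : ℤ → LaurentSeries A)
    (hθ0 : θ 0 = 1)
    (hθ : ∀ q : ℤ, 1 ≤ q →
      θ q = HahnSeries.single (-q) (1 : A) +
        HahnSeries.ofPowerSeries ℤ A
          (PowerSeries.mk fun p : ℕ => if 1 ≤ p then R ((p : ℤ), q) else 0))
    (k : ℤ) (hk : 1 ≤ k)
    (hmul : θ 1 * θ k = θ (k + 1)
        + (∑ r ∈ Finset.Icc (0 : ℤ) k, R (k - r, 1) • θ r)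
        + ∑ r ∈ Finset.Icc (0 : ℤ) k, R (1 - r, k) • θ r) :
    ∀ n : ℤ, k < n →
      R (n - k, k + 1) + ∑ r ∈ Finset.Icc (1 : ℤ) (k - 1), R (k - r, 1) * R (n - k, r)
        = R (n - k + 1, k) + R (n, 1)
          + ∑ a ∈ Finset.Icc (1 : ℤ) (n - k - 1), R (a, 1) * R (n - k - a, k) := by
  intro n hn
  set m : ℤ := n - k with hmdef
  have hm : 1 ≤ m := by omega
  set F : ℤ → LaurentSeries A := fun q => HahnSeries.ofPowerSeries ℤ A
      (PowerSeries.mk fun p : ℕ => if 1 ≤ p then R ((p : ℤ), q) else 0) with hF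
  have hFc : ∀ q : ℤ, ∀ a : ℤ, 1 ≤ a → (F q).coeff a = R (a, q) :=
    fun q a ha => Fcoeff (fun p => R (p, q)) a ha
  have hθ' : ∀ q : ℤ, 1 ≤ q → θ q = HahnSeries.single (-q) (1 : A) + F q :=
    fun q hq => hθ q hq
  -- coefficient of θ q at m
  have hθc : ∀ q : ℤ, 0 ≤ q → (θ q).coeff m = R (m, q) := by
    intro q hq
    rcases eq_or_lt_of_le hq with h | h
    · rw [← h, hθ0, hvanish m 0 (Or.inr le_rfl)]
      show (1 : LaurentSeries A).coeff m = 0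
      rw [HahnSeries.coeff_one, if_neg (by omega)]
    · rw [hθ q h, HahnSeries.coeff_add,
        HahnSeries.coeff_single_of_ne (by omega : m ≠ -q), zero_add, hFc q m hm]
  -- key equation: coefficient of both sides of hmul at m
  have key := congrArg (coeffHom A m) hmul
  -- LHS
  have lhs : (coeffHom A m) (θ 1 * θ k)
      = R (m + 1, k) + R (n, 1) + ∑ a ∈ Finset.Icc (1 : ℤ) (m - 1), R (a, 1) * R (m - a, k) := by
    rw [hθ' 1 le_rfl, hθ' k hk, add_mul, mul_add, mul_add]
    have c1 : (HahnSeries.single (-1 : ℤ) (1 : A) * HahnSeries.single (-k) (1 : A)).coeff m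
        = 0 := by
      rw [HahnSeries.single_mul_single, HahnSeries.coeff_single_of_ne (by omega)]
    have c2 : (HahnSeries.single (-1 : ℤ) (1 : A) * F k).coeff m = R (m + 1, k) := by
      have h := HahnSeries.coeff_single_mul_add (r := (1 : A)) (x := F k) (a := m + 1) (b := -1)
      rw [show m + 1 + -1 = m by ring] at h
      rw [h, one_mul, hFc k (m + 1) (by omega)]
    have c3 : (F 1 * HahnSeries.single (-k : ℤ) (1 : A)).coeff m = R (n, 1) := by
      have h := HahnSeries.coeff_mul_single_add (r := (1 : A)) (x := F 1) (a := m + k) (b := -k)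
      rw [show m + k + -k = m by ring] at h
      rw [h, mul_one, hFc 1 (m + k) (by omega), show m + k = n by omega]
    have c4 : (F 1 * F k).coeff m
        = ∑ a ∈ Finset.Icc (1 : ℤ) (m - 1), R (a, 1) * R (m - a, k) := by
      rw [hF]
      simp only
      rw [← map_mul]
      have h1 : m = ((m.toNat : ℕ) : ℤ) := by omega
      conv_lhs => rw [h1, HahnSeries.ofPowerSeries_apply_coeff, PowerSeries.coeff_mul]
      simp only [PowerSeries.coeff_mk]
      exact sum_anti (fun a => R (a, 1)) (fun a => R (a, k)) m hm
        (fun a ha => hvanish a 1 (Or.inl ha)) (fun a ha => hvanish a k (Or.inl ha))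
    show (_ + _ + (_ + _) : LaurentSeries A).coeff m = _
    rw [HahnSeries.coeff_add, HahnSeries.coeff_add, HahnSeries.coeff_add, c1, c2, c3, c4]
    ring
  -- RHS
  have rhs1 : (coeffHom A m) (θ (k + 1)) = R (m, k + 1) := hθc (k + 1) (by omega)
  have rhs2 : (coeffHom A m) (∑ r ∈ Finset.Icc (0 : ℤ) k, R (k - r, 1) • θ r)
      = ∑ r ∈ Finset.Icc (1 : ℤ) (k - 1), R (k - r, 1) * R (m, r) := by
    rw [map_sum]
    have h1 : ∀ r ∈ Finset.Icc (0 : ℤ) k,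
        (coeffHom A m) (R (k - r, 1) • θ r) = R (k - r, 1) * R (m, r) := by
      intro r hr
      simp only [Finset.mem_Icc] at hr
      show (R (k - r, 1) • θ r).coeff m = _
      rw [HahnSeries.coeff_smul, hθc r hr.1, smul_eq_mul]
    rw [Finset.sum_congr rfl h1]
    refine (Finset.sum_subset (fun a ha => by simp only [Finset.mem_Icc] at *; omega) ?_).symm
    intro r hr hr'
    simp only [Finset.mem_Icc] at hr hr'
    rcases (by omega : r = 0 ∨ r = k) with h | h
    · rw [h, hvanish m 0 (Or.inr le_rfl), mul_zero]
    · rw [h, sub_self, hvanish 0 1 (Or.inl le_rfl), zero_mul]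
  have rhs3 : (coeffHom A m) (∑ r ∈ Finset.Icc (0 : ℤ) k, R (1 - r, k) • θ r) = 0 := by
    rw [map_sum]
    refine Finset.sum_eq_zero fun r hr => ?_
    simp only [Finset.mem_Icc] at hr
    show (R (1 - r, k) • θ r).coeff m = 0
    rw [HahnSeries.coeff_smul, hθc r hr.1, smul_eq_mul]
    rcases (by omega : r = 0 ∨ 1 ≤ r) with h | h
    · rw [h, hvanish m 0 (Or.inr le_rfl), mul_zero]
    · rw [hvanish (1 - r) k (Or.inl (by omega)), zero_mul]
  rw [map_add, map_add, lhs, rhs1, rhs2, rhs3] at key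
  have hmk : m + 1 = n - k + 1 := by omega
  rw [hmdef] at key rhs1 ⊢
  linear_combination -key
end

section
/- Let P ⊂ ℝ² be a Fano polygon. Let v and w be adjacent vertices of P with det(v|w) > 0 (i.e. w follows v in counterclockwise order), and let m ∈ ℤ² be the primitive vector with w − v ∈ ℤ_{>0}·m. Then det(v|m) = 1. Equivalently, if m′ ∈ ℤ² is the primitive vector with v − w ∈ ℤ_{>0}·m′, then det(w|m′) = −1. -/
/-- Let `P ⊂ ℝ²` be a Fano polygon: the convex hull of a finite set of
integer points, with the origin in its interior, all of its vertices (= extreme points)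
primitive integer vectors, and the origin the only integer point in its interior.
Let `v` and `w` be adjacent vertices (distinct vertices spanning a segment contained in the
boundary of `P`) with `det(v|w) > 0`, and let `m` be the primitive integer vector with
`w - v ∈ ℤ_{>0}·m`.  Then `det(v|m) = 1`; equivalently, if `m'` is the primitive integer
vector with `v - w ∈ ℤ_{>0}·m'`, then `det(w|m') = -1`. -/
theorem statement3
    (S : Finset (ℤ × ℤ)) (P : Set (ℝ × ℝ))
    (hP : P = convexHull ℝ ((fun p : ℤ × ℤ => ((p.1 : ℝ), (p.2 : ℝ))) '' (S : Set (ℤ × ℤ))))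
    (h0 : (0 : ℝ × ℝ) ∈ interior P)
    (hvert : ∀ x ∈ Set.extremePoints ℝ P,
      ∃ p : ℤ × ℤ, Int.gcd p.1 p.2 = 1 ∧ x = ((p.1 : ℝ), (p.2 : ℝ)))
    (hint : ∀ p : ℤ × ℤ, ((p.1 : ℝ), (p.2 : ℝ)) ∈ interior P → p = 0)
    (v w : ℤ × ℤ)
    (hv : ((v.1 : ℝ), (v.2 : ℝ)) ∈ Set.extremePoints ℝ P)
    (hw : ((w.1 : ℝ), (w.2 : ℝ)) ∈ Set.extremePoints ℝ P)
    (hne : v ≠ w)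
    (hadj : segment ℝ ((v.1 : ℝ), (v.2 : ℝ)) ((w.1 : ℝ), (w.2 : ℝ)) ⊆ frontier P)
    (horient : 0 < v.1 * w.2 - v.2 * w.1)
    (m : ℤ × ℤ) (hm : Int.gcd m.1 m.2 = 1)
    (c : ℤ) (hc : 0 < c) (hwm : w - v = c • m) :
    v.1 * m.2 - v.2 * m.1 = 1 ∧
      ∀ m' : ℤ × ℤ, Int.gcd m'.1 m'.2 = 1 →
        ∀ c' : ℤ, 0 < c' → v - w = c' • m' → w.1 * m'.2 - w.2 * m'.1 = -1 := by

  have hconv : Convex ℝ P := by rw [hP]; exact convex_convexHull ℝ _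
  have hw1 : w.1 - v.1 = c * m.1 := by
    have h := congrArg Prod.fst hwm; simpa using h
  have hw2 : w.2 - v.2 = c * m.2 := by
    have h := congrArg Prod.snd hwm; simpa using h
  have hdpos : 0 < v.1 * m.2 - v.2 * m.1 := by
    have hcd : v.1 * w.2 - v.2 * w.1 = c * (v.1 * m.2 - v.2 * m.1) := by
      linear_combination v.1 * hw2 - v.2 * hw1
    nlinarith [horient, hc]
  obtain ⟨pv, hpvgcd, hpveq⟩ := hvert _ hv
  have hv1 : v = pv := by
    have h1 : (v.1 : ℝ) = pv.1 := congrArg Prod.fst hpveq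
    have h2 : (v.2 : ℝ) = pv.2 := congrArg Prod.snd hpveq
    exact Prod.ext (by exact_mod_cast h1) (by exact_mod_cast h2)
  have hvprim : Int.gcd v.1 v.2 = 1 := by rw [hv1]; exact hpvgcd
  have hmain : v.1 * m.2 - v.2 * m.1 = 1 := by
    by_contra hne1
    have hd2 : 2 ≤ v.1 * m.2 - v.2 * m.1 := by omega
    set d : ℤ := v.1 * m.2 - v.2 * m.1 with hd
    obtain ⟨s, t, hst⟩ := Int.isCoprime_iff_gcd_eq_one.mpr hvprim
    -- hst : s * v.1 + t * v.2 = 1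
    have hm1 : m.1 = (s * m.1 + t * m.2) * v.1 - d * t := by
      rw [hd]; linear_combination (-m.1) * hst
    have hm2 : m.2 = (s * m.1 + t * m.2) * v.2 + d * s := by
      rw [hd]; linear_combination (-m.2) * hst
    set l : ℤ := s * m.1 + t * m.2 with hl
    set k : ℤ := (-l) % d with hk
    have hk0 : 0 ≤ k := Int.emod_nonneg _ (by omega)
    have hkd : k < d := Int.emod_lt_of_pos _ hdpos
    obtain ⟨q, hq⟩ : d ∣ k + l := by
      have h := Int.emod_add_mul_ediv (-l) d
      exact ⟨-((-l) / d), by rw [hk]; linarith [h]⟩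
    have hk1 : 1 ≤ k := by
      rcases eq_or_lt_of_le hk0 with h | h
      · exfalso
        have hdm1 : d ∣ m.1 := ⟨q * v.1 - t, by rw [hm1]; linear_combination v.1 * hq + v.1 * h⟩
        have hdm2 : d ∣ m.2 := ⟨q * v.2 + s, by rw [hm2]; linear_combination v.2 * hq + v.2 * h⟩
        have : d ∣ ((Int.gcd m.1 m.2 : ℤ)) := Int.dvd_coe_gcd hdm1 hdm2
        rw [hm] at this
        have := Int.le_of_dvd (by norm_num) this
        omega
      · omega
    set e1 : ℤ := q * v.1 - t with he1d
    set e2 : ℤ := q * v.2 + s with he2d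
    have he1 : k * v.1 + m.1 = d * e1 := by
      rw [he1d, hm1]; linear_combination v.1 * hq
    have he2 : k * v.2 + m.2 = d * e2 := by
      rw [he2d, hm2]; linear_combination v.2 * hq
    have hdet : e1 * v.2 - e2 * v.1 = -1 := by
      have h : d * (e1 * v.2 - e2 * v.1) = d * (-1) := by
        linear_combination (-v.2) * he1 + v.1 * he2 - hd
      exact mul_left_cancel₀ (by omega) h
    -- real versions
    have hkR : (1 : ℝ) ≤ (k : ℝ) := by exact_mod_cast hk1
    have hcR : (1 : ℝ) ≤ (c : ℝ) := by exact_mod_cast hc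
    have hdR : (0 : ℝ) < (d : ℝ) := by exact_mod_cast hdpos
    have hkdR : (k : ℝ) < (d : ℝ) := by exact_mod_cast hkd
    have hw1R : (w.1 : ℝ) = (v.1 : ℝ) + (c : ℝ) * (m.1 : ℝ) := by
      have h : ((w.1 : ℝ)) - (v.1 : ℝ) = (c : ℝ) * (m.1 : ℝ) := by exact_mod_cast hw1
      linarith
    have hw2R : (w.2 : ℝ) = (v.2 : ℝ) + (c : ℝ) * (m.2 : ℝ) := by
      have h : ((w.2 : ℝ)) - (v.2 : ℝ) = (c : ℝ) * (m.2 : ℝ) := by exact_mod_cast hw2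
      linarith
    have he1R : (k : ℝ) * (v.1 : ℝ) + (m.1 : ℝ) = (d : ℝ) * (e1 : ℝ) := by exact_mod_cast he1
    have he2R : (k : ℝ) * (v.2 : ℝ) + (m.2 : ℝ) = (d : ℝ) * (e2 : ℝ) := by exact_mod_cast he2
    have hkne : (k : ℝ) ≠ 0 := by linarith
    have hkcne : (k : ℝ) * (c : ℝ) ≠ 0 := by positivity
    -- the point Y on the edge
    set Y : ℝ × ℝ := ((v.1 : ℝ) + (1 / (k : ℝ)) * (m.1 : ℝ),
                      (v.2 : ℝ) + (1 / (k : ℝ)) * (m.2 : ℝ)) with hY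
    have hYseg : Y ∈ segment ℝ ((v.1 : ℝ), (v.2 : ℝ)) ((w.1 : ℝ), (w.2 : ℝ)) := by
      refine ⟨1 - 1 / ((k : ℝ) * (c : ℝ)), 1 / ((k : ℝ) * (c : ℝ)), ?_, ?_, ?_, ?_⟩
      · have h1 : (1 : ℝ) ≤ (k : ℝ) * (c : ℝ) := by nlinarith
        have : 1 / ((k : ℝ) * (c : ℝ)) ≤ 1 := by
          rw [div_le_one (by linarith)]; linarith
        linarith
      · positivity
      · ring
      · rw [hY, Prod.smul_mk, Prod.smul_mk, Prod.mk_add_mk, Prod.mk.injEq]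
        constructor
        · rw [hw1R]; have hcne : (c:ℝ) ≠ 0 := (by linarith); linear_combination ((m.1 : ℝ) * (k:ℝ)⁻¹) * (inv_mul_cancel₀ hcne)
        · rw [hw2R]; have hcne : (c:ℝ) ≠ 0 := (by linarith); linear_combination ((m.2 : ℝ) * (k:ℝ)⁻¹) * (inv_mul_cancel₀ hcne)
    have hYcl : Y ∈ closure P := frontier_subset_closure (hadj hYseg)
    have hintY : ((1 : ℝ) - (k : ℝ) / (d : ℝ)) • (0 : ℝ × ℝ) + ((k : ℝ) / (d : ℝ)) • Y
        ∈ interior P := by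
      refine hconv.combo_interior_closure_mem_interior h0 hYcl ?_ ?_ (by ring)
      · have : (k : ℝ) / (d : ℝ) < 1 := by rw [div_lt_one hdR]; exact hkdR
        linarith
      · positivity
    have hpe : ((1 : ℝ) - (k : ℝ) / (d : ℝ)) • (0 : ℝ × ℝ) + ((k : ℝ) / (d : ℝ)) • Y
        = ((e1 : ℝ), (e2 : ℝ)) := by
      rw [smul_zero, zero_add, hY, Prod.smul_mk, Prod.mk.injEq]
      constructor
      · have hdne : (d:ℝ) ≠ 0 := (ne_of_gt hdR); linear_combination (d:ℝ)⁻¹ * he1R + ((d:ℝ)⁻¹ * (m.1 : ℝ)) * (mul_inv_cancel₀ hkne) + (e1 : ℝ) * (inv_mul_cancel₀ hdne)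
      · have hdne : (d:ℝ) ≠ 0 := (ne_of_gt hdR); linear_combination (d:ℝ)⁻¹ * he2R + ((d:ℝ)⁻¹ * (m.2 : ℝ)) * (mul_inv_cancel₀ hkne) + (e2 : ℝ) * (inv_mul_cancel₀ hdne)
    rw [hpe] at hintY
    have hp0 : ((e1, e2) : ℤ × ℤ) = 0 := hint (e1, e2) hintY
    rw [Prod.mk.injEq] at hp0
    obtain ⟨h1, h2⟩ := hp0
    rw [h1, h2] at hdet
    norm_num at hdet
  refine ⟨hmain, ?_⟩
  intro m' hm' c' hc' hwm'
  have hw1' : v.1 - w.1 = c' * m'.1 := by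
    have h := congrArg Prod.fst hwm'; simpa using h
  have hw2' : v.2 - w.2 = c' * m'.2 := by
    have h := congrArg Prod.snd hwm'; simpa using h
  have hcc1 : c' * m'.1 = -(c * m.1) := by linarith
  have hcc2 : c' * m'.2 = -(c * m.2) := by linarith
  have hgcd : c'.natAbs = c.natAbs := by
    have h1 : Int.gcd (c' * m'.1) (c' * m'.2) = c'.natAbs := by
      rw [Int.gcd_mul_left, hm', mul_one]
    have h2 : Int.gcd (-(c * m.1)) (-(c * m.2)) = c.natAbs := by
      rw [Int.neg_gcd, Int.gcd_neg, Int.gcd_mul_left, hm, mul_one]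
    rw [hcc1, hcc2] at h1
    rw [h1] at h2; exact h2
  have hc'c : c' = c := by omega
  have hm'1 : m'.1 = -m.1 := by
    have h : c' * m'.1 = c' * (-m.1) := by rw [hcc1, hc'c]; ring
    exact mul_left_cancel₀ (by omega) h
  have hm'2 : m'.2 = -m.2 := by
    have h : c' * m'.2 = c' * (-m.2) := by rw [hcc2, hc'c]; ring
    exact mul_left_cancel₀ (by omega) h
  rw [hm'1, hm'2]
  linear_combination (-m.2) * hw1 + m.1 * hw2 - hmain
end

section
/- Let P ⊂ ℝ² be a Fano polygon and let v₁, v₂ be adjacent vertices of P with det(v₁|v₂) > 0 such that v₂ − v₁ is a primitive vector of ℤ² (the edge [v₁,v₂] has lattice length 1). Let m₁ ∈ ℤ² be the primitive direction, pointing away from v₁, of the edge of P at v₁ other than [v₁,v₂]. Then: (i) det(v₁|v₂) = 1; and (ii) det(v₂|m₁) = det(v₂ − v₁|m₁) − 1. -/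
lemma fano_supp (P : Set (ℝ × ℝ)) (hconv : Convex ℝ P)
    (h0 : (0 : ℝ × ℝ) ∈ interior P)
    (w₁ w₂ : ℝ × ℝ) (hw12 : w₁ ≠ w₂)
    (hfr : segment ℝ w₁ w₂ ⊆ frontier P) :
    (w₁.1 * w₂.2 - w₁.2 * w₂.1 ≠ 0) ∧
    ∀ x ∈ P, 0 ≤ (w₁.1 * w₂.2 - w₁.2 * w₂.1) *
      ((w₂.1 - w₁.1) * (x.2 - w₁.2) - (w₂.2 - w₁.2) * (x.1 - w₁.1)) := by
  have hwseg : (1/2 : ℝ) • w₁ + (1/2 : ℝ) • w₂ ∈ segment ℝ w₁ w₂ :=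
    ⟨1/2, 1/2, by norm_num, by norm_num, by norm_num, rfl⟩
  set w : ℝ × ℝ := (1/2 : ℝ) • w₁ + (1/2 : ℝ) • w₂ with hw
  have hwni : w ∉ interior P := fun h => (hfr hwseg).2 h
  obtain ⟨f, hf⟩ := geometric_hahn_banach_open_point (hconv.interior) isOpen_interior hwni
  have hfw0 : (0 : ℝ) < f w := by
    have := hf 0 h0; rwa [map_zero] at this
  have key : ∀ x ∈ P, f x ≤ f w := by
    intro x hx
    by_contra hgt
    push_neg at hgt
    have hfx0 : 0 < f x := lt_trans hfw0 hgt
    have hb0 : 0 < f w / f x := div_pos hfw0 hfx0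
    have hb1 : f w / f x < 1 := (div_lt_one hfx0).2 hgt
    have hmem : (1 - f w / f x) • (0 : ℝ × ℝ) + (f w / f x) • x ∈ interior P :=
      hconv.combo_interior_self_mem_interior h0 hx (by linarith) hb0.le (by ring)
    have h2 := hf _ hmem
    rw [map_add, map_smul, map_smul, map_zero, smul_zero, zero_add, smul_eq_mul,
      div_mul_cancel₀ _ hfx0.ne'] at h2
    exact lt_irrefl _ h2
  have keycl : ∀ x ∈ closure P, f x ≤ f w := by
    intro x hx
    have hcl : closure P ⊆ {y | f y ≤ f w} :=
      closure_minimal (fun y hy => key y hy) (isClosed_le f.continuous continuous_const)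
    exact hcl hx
  have hw1P : f w₁ ≤ f w := keycl _ (hfr (left_mem_segment ℝ w₁ w₂)).1
  have hw2P : f w₂ ≤ f w := keycl _ (hfr (right_mem_segment ℝ w₁ w₂)).1
  have hfwmid : f w = (1/2) * f w₁ + (1/2) * f w₂ := by
    rw [hw, map_add, map_smul, map_smul]; simp [smul_eq_mul]
  have hfeq1 : f w₁ = f w := by linarith
  have hfeq2 : f w₂ = f w := by linarith
  have hfx : ∀ x : ℝ × ℝ, f x = f (1, 0) * x.1 + f (0, 1) * x.2 := by
    intro x
    have hx : x = x.1 • ((1 : ℝ), (0 : ℝ)) + x.2 • ((0 : ℝ), (1 : ℝ)) := by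
      ext <;> simp
    nth_rewrite 1 [hx]
    rw [map_add, map_smul, map_smul, smul_eq_mul, smul_eq_mul]; ring
  set a : ℝ := f (1, 0)
  set b : ℝ := f (0, 1)
  have hperp : a * (w₂.1 - w₁.1) + b * (w₂.2 - w₁.2) = 0 := by
    have h1 := hfx w₁
    have h2 := hfx w₂
    rw [hfeq1] at h1; rw [hfeq2] at h2
    linarith
  have hβ : 0 < a * w₁.1 + b * w₁.2 := by
    have := hfx w₁
    rw [hfeq1] at this; linarith
  -- key algebraic identity
  have hid : ∀ x : ℝ × ℝ,
      ((w₂.1 - w₁.1)^2 + (w₂.2 - w₁.2)^2) * ((a*x.1 + b*x.2) - (a*w₁.1 + b*w₁.2)) =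
      (b*(w₂.1 - w₁.1) - a*(w₂.2 - w₁.2)) *
        ((w₂.1 - w₁.1)*(x.2 - w₁.2) - (w₂.2 - w₁.2)*(x.1 - w₁.1)) := by
    intro x
    linear_combination ((w₂.1 - w₁.1)*(x.1 - w₁.1) + (w₂.2 - w₁.2)*(x.2 - w₁.2)) * hperp
  have heN : 0 < (w₂.1 - w₁.1)^2 + (w₂.2 - w₁.2)^2 := by
    have : w₂.1 - w₁.1 ≠ 0 ∨ w₂.2 - w₁.2 ≠ 0 := by
      by_contra hcon
      push_neg at hcon
      exact hw12 (Prod.ext (by linarith [hcon.1]) (by linarith [hcon.2])).symm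
    rcases this with h | h <;> positivity
  set μ : ℝ := b*(w₂.1 - w₁.1) - a*(w₂.2 - w₁.2) with hμdef
  have hμD : μ * (w₁.1 * w₂.2 - w₁.2 * w₂.1) < 0 := by
    have h1 := hid 0
    simp only [Prod.fst_zero, Prod.snd_zero, mul_zero, zero_add, zero_sub] at h1
    nlinarith [mul_pos heN hβ, h1]
  have hμne : μ ≠ 0 := by
    intro h; rw [h, zero_mul] at hμD; exact lt_irrefl _ hμD
  have hDne : w₁.1 * w₂.2 - w₁.2 * w₂.1 ≠ 0 := by
    intro h; rw [h, mul_zero] at hμD; exact lt_irrefl _ hμD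
  refine ⟨hDne, fun x hx => ?_⟩
  have hle : f x ≤ f w₁ := hfeq1 ▸ key x hx
  have hle2 : a*x.1 + b*x.2 ≤ a*w₁.1 + b*w₁.2 := by
    have h1 := hfx x
    have h2 := hfx w₁
    linarith
  have hμdet : μ * ((w₂.1 - w₁.1)*(x.2 - w₁.2) - (w₂.2 - w₁.2)*(x.1 - w₁.1)) ≤ 0 := by
    have h1 := hid x
    nlinarith [mul_nonneg heN.le (by linarith : (0:ℝ) ≤ (a*w₁.1 + b*w₁.2) - (a*x.1 + b*x.2))]
  have hsq : 0 < μ^2 := by positivity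
  by_contra hcon
  push_neg at hcon
  nlinarith [mul_pos hsq (by linarith : (0:ℝ) <
    -((w₁.1 * w₂.2 - w₁.2 * w₂.1) * ((w₂.1 - w₁.1)*(x.2 - w₁.2) - (w₂.2 - w₁.2)*(x.1 - w₁.1)))),
    mul_nonneg (by linarith : (0:ℝ) ≤ -(μ * ((w₂.1 - w₁.1)*(x.2 - w₁.2) - (w₂.2 - w₁.2)*(x.1 - w₁.1)))) (by linarith : (0:ℝ) ≤ -(μ * (w₁.1 * w₂.2 - w₁.2 * w₂.1)))]


lemma fano_int (P : Set (ℝ × ℝ)) (hconv : Convex ℝ P)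
    (h0 : (0 : ℝ × ℝ) ∈ interior P)
    (w₁ w₂ : ℝ × ℝ) (hw₁ : w₁ ∈ P) (hw₂ : w₂ ∈ P)
    (l₁ l₂ : ℝ) (h1 : 0 < l₁) (h2 : 0 < l₂) (h3 : l₁ + l₂ < 1) :
    l₁ • w₁ + l₂ • w₂ ∈ interior P := by
  have hs : (0:ℝ) < l₁ + l₂ := by linarith
  have hr : (l₁/(l₁+l₂)) • w₁ + (l₂/(l₁+l₂)) • w₂ ∈ P :=
    hconv hw₁ hw₂ (by positivity) (by positivity) (by field_simp)
  have hmem := hconv.combo_interior_self_mem_interior h0 hr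
    (a := 1 - (l₁+l₂)) (b := l₁+l₂) (by linarith) (by linarith) (by ring)
  rw [smul_zero, zero_add, smul_add, smul_smul, smul_smul,
    mul_div_cancel₀ _ hs.ne', mul_div_cancel₀ _ hs.ne'] at hmem
  exact hmem

lemma fano_arith (h t c : ℤ) (hh : 2 ≤ h) (hc : 0 < c)
    (hght : Int.gcd h t = 1) (hghtc : Int.gcd h (t + c) = 1) :
    ∃ j β : ℤ, h * β = j * t + 1 ∧ 1 ≤ j ∧ j < h ∧ 2 ≤ j * c := by
  have hh0 : (0:ℤ) < h := by linarith
  have hbez2 : (1:ℤ) = t * Int.gcdA t h + h * Int.gcdB t h := by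
    have := Int.gcd_eq_gcd_ab t h
    rw [Int.gcd_comm, hght] at this; exact_mod_cast this
  obtain ⟨A, B, hbez⟩ : ∃ A B : ℤ, (1:ℤ) = t * A + h * B :=
    ⟨_, _, hbez2⟩
  obtain ⟨j, hjdef⟩ : ∃ j : ℤ, j = (-A) % h := ⟨_, rfl⟩
  have hj0 : 0 ≤ j := hjdef ▸ Int.emod_nonneg _ (by linarith)
  have hjh : j < h := hjdef ▸ Int.emod_lt_of_pos _ hh0
  have hmod : j = -A - h * ((-A) / h) := by rw [hjdef, Int.emod_def]
  have hdvd : h ∣ j * t + 1 := by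
    refine ⟨B - ((-A) / h) * t, ?_⟩
    rw [hmod]; linear_combination hbez
  obtain ⟨β, hβ⟩ : ∃ β, j * t + 1 = h * β := hdvd
  have hjne : j ≠ 0 := by
    intro hj
    rw [hj, zero_mul, zero_add] at hβ
    have : h ∣ 1 := ⟨β, hβ⟩
    have := Int.le_of_dvd one_pos this
    linarith
  have hjc : 2 ≤ j * c := by
    rcases (by omega : c = 1 ∨ 2 ≤ c) with hc1 | hc2
    · have hjne1 : j ≠ 1 := by
        intro hj
        rw [hj, one_mul] at hβ
        have hdtc : h ∣ t + c := by rw [hc1]; exact ⟨β, by linarith⟩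
        have : (h:ℤ) ∣ (Int.gcd h (t+c) : ℤ) := Int.dvd_coe_gcd dvd_rfl hdtc
        rw [hghtc] at this
        have := Int.le_of_dvd one_pos (by exact_mod_cast this)
        linarith
      have : 2 ≤ j := by omega
      nlinarith
    · have : 1 ≤ j := by omega
      nlinarith
  exact ⟨j, β, hβ.symm, by omega, hjh, hjc⟩

lemma fano_height_le_one (P : Set (ℝ × ℝ)) (hconv : Convex ℝ P)
    (h0 : (0 : ℝ × ℝ) ∈ interior P)
    (hint : ∀ p : ℤ × ℤ, ((p.1 : ℝ), (p.2 : ℝ)) ∈ interior P → p = 0)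
    (w₁ w₂ : ℤ × ℤ)
    (hw₁ : ((w₁.1 : ℝ), (w₁.2 : ℝ)) ∈ P) (hw₂ : ((w₂.1 : ℝ), (w₂.2 : ℝ)) ∈ P)
    (hw₁p : Int.gcd w₁.1 w₁.2 = 1) (hw₂p : Int.gcd w₂.1 w₂.2 = 1)
    (e : ℤ × ℤ) (he : Int.gcd e.1 e.2 = 1)
    (c : ℤ) (hc : 0 < c) (hce : w₂ - w₁ = c • e) :
    w₁.1 * e.2 - w₁.2 * e.1 ≤ 1 := by
  by_contra hcon
  push_neg at hcon
  obtain ⟨h, hhdef⟩ : ∃ h : ℤ, h = w₁.1 * e.2 - w₁.2 * e.1 := ⟨_, rfl⟩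
  have hh : 2 ≤ h := by omega
  have hh0 : (0:ℤ) < h := by linarith
  have hbez : (1:ℤ) = e.1 * Int.gcdA e.1 e.2 + e.2 * Int.gcdB e.1 e.2 := by
    have := Int.gcd_eq_gcd_ab e.1 e.2
    rw [he] at this; exact_mod_cast this
  obtain ⟨u1, u2, hue⟩ : ∃ u1 u2 : ℤ, u1 * e.2 - u2 * e.1 = 1 :=
    ⟨Int.gcdB e.1 e.2, -(Int.gcdA e.1 e.2), by linear_combination -hbez⟩
  obtain ⟨t, htdef⟩ : ∃ t : ℤ, t = u1 * w₁.2 - u2 * w₁.1 := ⟨_, rfl⟩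
  have hW11 : w₁.1 = h * u1 + t * e.1 := by
    rw [hhdef, htdef]; linear_combination (-w₁.1) * hue
  have hW12 : w₁.2 = h * u2 + t * e.2 := by
    rw [hhdef, htdef]; linear_combination (-w₁.2) * hue
  have hce1 : w₂.1 = w₁.1 + c * e.1 := by
    have := congrArg Prod.fst hce
    simp only [Prod.fst_sub, Prod.smul_fst, smul_eq_mul] at this
    linarith
  have hce2 : w₂.2 = w₁.2 + c * e.2 := by
    have := congrArg Prod.snd hce
    simp only [Prod.snd_sub, Prod.smul_snd, smul_eq_mul] at this
    linarith
  have hW21 : w₂.1 = h * u1 + (t + c) * e.1 := by rw [hce1, hW11]; ring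
  have hW22 : w₂.2 = h * u2 + (t + c) * e.2 := by rw [hce2, hW12]; ring
  have hght : Int.gcd h t = 1 := by
    have d1 : (Int.gcd h t : ℤ) ∣ w₁.1 := by
      rw [hW11]
      exact dvd_add ((Int.gcd_dvd_left h t).mul_right u1) ((Int.gcd_dvd_right h t).mul_right e.1)
    have d2 : (Int.gcd h t : ℤ) ∣ w₁.2 := by
      rw [hW12]
      exact dvd_add ((Int.gcd_dvd_left h t).mul_right u2) ((Int.gcd_dvd_right h t).mul_right e.2)
    have d3 : (Int.gcd h t : ℤ) ∣ (Int.gcd w₁.1 w₁.2 : ℤ) := Int.dvd_coe_gcd d1 d2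
    rw [hw₁p] at d3
    exact Nat.dvd_one.mp (Int.natCast_dvd_natCast.mp (by exact_mod_cast d3))
  have hghtc : Int.gcd h (t + c) = 1 := by
    have d1 : (Int.gcd h (t+c) : ℤ) ∣ w₂.1 := by
      rw [hW21]
      exact dvd_add ((Int.gcd_dvd_left h (t+c)).mul_right u1) ((Int.gcd_dvd_right h (t+c)).mul_right e.1)
    have d2 : (Int.gcd h (t+c) : ℤ) ∣ w₂.2 := by
      rw [hW22]
      exact dvd_add ((Int.gcd_dvd_left h (t+c)).mul_right u2) ((Int.gcd_dvd_right h (t+c)).mul_right e.2)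
    have d3 : (Int.gcd h (t+c) : ℤ) ∣ (Int.gcd w₂.1 w₂.2 : ℤ) := Int.dvd_coe_gcd d1 d2
    rw [hw₂p] at d3
    exact Nat.dvd_one.mp (Int.natCast_dvd_natCast.mp (by exact_mod_cast d3))
  obtain ⟨j, β, hβ, hj1, hjh, hjc⟩ := fano_arith h t c hh hc hght hghtc
  obtain ⟨q1, hq1def⟩ : ∃ q1 : ℤ, q1 = j * u1 + β * e.1 := ⟨_, rfl⟩
  obtain ⟨q2, hq2def⟩ : ∃ q2 : ℤ, q2 = j * u2 + β * e.2 := ⟨_, rfl⟩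
  have hdetq : q1 * e.2 - q2 * e.1 = j := by
    rw [hq1def, hq2def]; linear_combination j * hue
  have hZ1 : c * h * q1 = (j * c - 1) * w₁.1 + w₂.1 := by
    rw [hW11, hW21, hq1def]
    linear_combination c * e.1 * hβ
  have hZ2 : c * h * q2 = (j * c - 1) * w₁.2 + w₂.2 := by
    rw [hW12, hW22, hq2def]
    linear_combination c * e.2 * hβ
  have hcR : (0:ℝ) < (c:ℝ) := by exact_mod_cast hc
  have hhR : (2:ℝ) ≤ (h:ℝ) := by exact_mod_cast hh
  have hjR : (j:ℝ) < (h:ℝ) := by exact_mod_cast hjh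
  have hjcR : (2:ℝ) ≤ (j:ℝ) * c := by exact_mod_cast hjc
  have hch : (0:ℝ) < (c:ℝ) * h := by nlinarith
  obtain ⟨l₁, hl₁⟩ : ∃ l₁ : ℝ, l₁ = ((j:ℝ) * c - 1) / ((c:ℝ) * h) := ⟨_, rfl⟩
  obtain ⟨l₂, hl₂⟩ : ∃ l₂ : ℝ, l₂ = 1 / ((c:ℝ) * h) := ⟨_, rfl⟩
  have hl₁0 : 0 < l₁ := by rw [hl₁]; apply div_pos (by linarith) hch
  have hl₂0 : 0 < l₂ := by rw [hl₂]; positivity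
  have hsum : l₁ + l₂ < 1 := by
    rw [hl₁, hl₂, ← add_div, div_lt_one hch]
    nlinarith
  have hq1R : ((q1:ℤ):ℝ) = l₁ * (w₁.1:ℝ) + l₂ * (w₂.1:ℝ) := by
    rw [hl₁, hl₂]
    have h1 : ((c:ℝ)) * (h:ℝ) * (q1:ℝ) = ((j:ℝ) * c - 1) * (w₁.1:ℝ) + (w₂.1:ℝ) := by
      exact_mod_cast hZ1
    field_simp
    linear_combination h1
  have hq2R : ((q2:ℤ):ℝ) = l₁ * (w₁.2:ℝ) + l₂ * (w₂.2:ℝ) := by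
    rw [hl₁, hl₂]
    have h2 : ((c:ℝ)) * (h:ℝ) * (q2:ℝ) = ((j:ℝ) * c - 1) * (w₁.2:ℝ) + (w₂.2:ℝ) := by
      exact_mod_cast hZ2
    field_simp
    linear_combination h2
  have hmem : (((q1:ℝ), (q2:ℝ)) : ℝ × ℝ) ∈ interior P := by
    have hm := fano_int P hconv h0 _ _ hw₁ hw₂ l₁ l₂ hl₁0 hl₂0 hsum
    convert hm using 1
    apply Prod.ext
    · simpa using hq1R
    · simpa using hq2R
  have hz := hint (q1, q2) (by simpa using hmem)
  rw [Prod.ext_iff] at hz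
  simp only [Prod.fst_zero, Prod.snd_zero] at hz
  rw [hz.1, hz.2] at hdetq
  simp at hdetq
  omega


lemma prim_parallel (a b : ℤ × ℤ) (ha : Int.gcd a.1 a.2 = 1) (hb : Int.gcd b.1 b.2 = 1)
    (hdet : a.1 * b.2 - a.2 * b.1 = 0) : b = a ∨ b = -a := by
  have hbez : (1:ℤ) = a.1 * Int.gcdA a.1 a.2 + a.2 * Int.gcdB a.1 a.2 := by
    have := Int.gcd_eq_gcd_ab a.1 a.2
    rw [ha] at this; exact_mod_cast this
  obtain ⟨x, y, hxy⟩ : ∃ x y : ℤ, a.1 * x + a.2 * y = 1 := ⟨_, _, hbez.symm⟩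
  obtain ⟨k, hk⟩ : ∃ k : ℤ, k = b.1 * x + b.2 * y := ⟨_, rfl⟩
  have hb1 : b.1 = k * a.1 := by rw [hk]; linear_combination (-b.1) * hxy - y * hdet
  have hb2 : b.2 = k * a.2 := by rw [hk]; linear_combination (-b.2) * hxy + x * hdet
  have hgk : Int.gcd (k * a.1) (k * a.2) = 1 := by rw [← hb1, ← hb2]; exact hb
  rw [Int.gcd_mul_left, ha, mul_one] at hgk
  rcases Int.natAbs_eq_iff.mp hgk with hk1 | hk1
  · left; apply Prod.ext <;> simp [hb1, hb2, hk1]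
  · right; apply Prod.ext <;> simp [hb1, hb2, hk1]

/-- Let `P ⊂ ℝ²` be a Fano polygon (convex hull of a finite set of integer
points, origin in the interior, all vertices primitive, origin the only interior integer
point).  Let `v₁, v₂` be adjacent vertices with `det(v₁|v₂) > 0` such that `v₂ - v₁` is
primitive (the edge `[v₁, v₂]` has lattice length 1).  Let `m₁` be the primitive direction,
pointing away from `v₁`, of the edge of `P` at `v₁` other than `[v₁, v₂]` (i.e. `v₀` is the
other vertex adjacent to `v₁` and `v₀ - v₁ ∈ ℤ_{>0}·m₁`).  Then
(i) `det(v₁|v₂) = 1` and (ii) `det(v₂|m₁) = det(v₂ - v₁|m₁) - 1`. -/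
theorem statement4
    (S : Finset (ℤ × ℤ)) (P : Set (ℝ × ℝ))
    (hP : P = convexHull ℝ ((fun p : ℤ × ℤ => ((p.1 : ℝ), (p.2 : ℝ))) '' (S : Set (ℤ × ℤ))))
    (h0 : (0 : ℝ × ℝ) ∈ interior P)
    (hvert : ∀ x ∈ Set.extremePoints ℝ P,
      ∃ p : ℤ × ℤ, Int.gcd p.1 p.2 = 1 ∧ x = ((p.1 : ℝ), (p.2 : ℝ)))
    (hint : ∀ p : ℤ × ℤ, ((p.1 : ℝ), (p.2 : ℝ)) ∈ interior P → p = 0)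
    (v₁ v₂ : ℤ × ℤ)
    (hv₁ : ((v₁.1 : ℝ), (v₁.2 : ℝ)) ∈ Set.extremePoints ℝ P)
    (hv₂ : ((v₂.1 : ℝ), (v₂.2 : ℝ)) ∈ Set.extremePoints ℝ P)
    (hne : v₁ ≠ v₂)
    (hadj : segment ℝ ((v₁.1 : ℝ), (v₁.2 : ℝ)) ((v₂.1 : ℝ), (v₂.2 : ℝ)) ⊆ frontier P)
    (horient : 0 < v₁.1 * v₂.2 - v₁.2 * v₂.1)
    (hprim : Int.gcd (v₂ - v₁).1 (v₂ - v₁).2 = 1)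
    (v₀ : ℤ × ℤ)
    (hv₀ : ((v₀.1 : ℝ), (v₀.2 : ℝ)) ∈ Set.extremePoints ℝ P)
    (hne₀₁ : v₀ ≠ v₁) (hne₀₂ : v₀ ≠ v₂)
    (hadj₀ : segment ℝ ((v₁.1 : ℝ), (v₁.2 : ℝ)) ((v₀.1 : ℝ), (v₀.2 : ℝ)) ⊆ frontier P)
    (m₁ : ℤ × ℤ) (hm₁ : Int.gcd m₁.1 m₁.2 = 1)
    (c : ℤ) (hc : 0 < c) (hcm : v₀ - v₁ = c • m₁) :
    v₁.1 * v₂.2 - v₁.2 * v₂.1 = 1 ∧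
      v₂.1 * m₁.2 - v₂.2 * m₁.1 = ((v₂ - v₁).1 * m₁.2 - (v₂ - v₁).2 * m₁.1) - 1 := by
  have hconv : Convex ℝ P := hP ▸ convex_convexHull ℝ _
  have hinj : ∀ p q : ℤ × ℤ, ((p.1:ℝ),(p.2:ℝ)) = ((q.1:ℝ),(q.2:ℝ)) → p = q := by
    intro p q h
    rw [Prod.ext_iff] at h ⊢
    simp only [] at h
    obtain ⟨h1, h2⟩ := h
    constructor
    · exact_mod_cast h1
    · exact_mod_cast h2
  have prim : ∀ v : ℤ × ℤ, ((v.1:ℝ),(v.2:ℝ)) ∈ Set.extremePoints ℝ P →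
      Int.gcd v.1 v.2 = 1 := by
    intro v hv
    obtain ⟨p, hp, hpe⟩ := hvert _ hv
    rwa [hinj p v hpe.symm] at hp
  have hprim₁ : Int.gcd v₁.1 v₁.2 = 1 := prim v₁ hv₁
  have hprim₂ : Int.gcd v₂.1 v₂.2 = 1 := prim v₂ hv₂
  have hprim₀ : Int.gcd v₀.1 v₀.2 = 1 := prim v₀ hv₀
  have hsub1 : (v₂ - v₁).1 = v₂.1 - v₁.1 := rfl
  have hsub2 : (v₂ - v₁).2 = v₂.2 - v₁.2 := rfl
  have hcm1 : v₀.1 = v₁.1 + c * m₁.1 := by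
    have := congrArg Prod.fst hcm
    simp only [Prod.fst_sub, Prod.smul_fst, smul_eq_mul] at this
    linarith
  have hcm2 : v₀.2 = v₁.2 + c * m₁.2 := by
    have := congrArg Prod.snd hcm
    simp only [Prod.snd_sub, Prod.smul_snd, smul_eq_mul] at this
    linarith
  -- Part (i)
  have part1 : v₁.1 * v₂.2 - v₁.2 * v₂.1 = 1 := by
    have hle := fano_height_le_one P hconv h0 hint v₁ v₂ hv₁.1 hv₂.1 hprim₁ hprim₂
      (v₂ - v₁) hprim 1 one_pos (one_smul _ _).symm
    rw [hsub1, hsub2] at hle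
    have heq : v₁.1 * (v₂.2 - v₁.2) - v₁.2 * (v₂.1 - v₁.1) = v₁.1 * v₂.2 - v₁.2 * v₂.1 := by
      ring
    rw [heq] at hle
    linarith
  refine ⟨part1, ?_⟩
  -- Part (ii): first, the orientation of v₀.
  have hne₁₂R : ((v₁.1:ℝ),(v₁.2:ℝ)) ≠ ((v₂.1:ℝ),(v₂.2:ℝ)) := fun h => hne (hinj _ _ h)
  have hne₁₀R : ((v₁.1:ℝ),(v₁.2:ℝ)) ≠ ((v₀.1:ℝ),(v₀.2:ℝ)) := fun h => hne₀₁ (hinj _ _ h).symm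
  obtain ⟨hD12ne, hsupp12⟩ := fano_supp P hconv h0 _ _ hne₁₂R hadj
  obtain ⟨hD10ne, hsupp10⟩ := fano_supp P hconv h0 _ _ hne₁₀R hadj₀
  simp only at hD12ne hsupp12 hD10ne hsupp10
  -- E ≥ 0
  have hE0 : 0 ≤ (v₂.1 - v₁.1) * m₁.2 - (v₂.2 - v₁.2) * m₁.1 := by
    have h1 := hsupp12 _ hv₀.1
    simp only at h1
    have h2 : (0:ℤ) ≤ (v₁.1 * v₂.2 - v₁.2 * v₂.1) *
        ((v₂.1 - v₁.1) * (v₀.2 - v₁.2) - (v₂.2 - v₁.2) * (v₀.1 - v₁.1)) := by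
      exact_mod_cast h1
    rw [part1, one_mul] at h2
    have h3 : (v₂.1 - v₁.1) * (v₀.2 - v₁.2) - (v₂.2 - v₁.2) * (v₀.1 - v₁.1) =
        c * ((v₂.1 - v₁.1) * m₁.2 - (v₂.2 - v₁.2) * m₁.1) := by
      rw [hcm1, hcm2]; ring
    rw [h3] at h2
    nlinarith [h2, hc]
  -- the key quantity h := det(m₁ | v₁)
  have hcR : ((c:ℝ)) ≠ 0 := by positivity
  have hcm1R : ((v₀.1:ℝ)) = (v₁.1:ℝ) + (c:ℝ) * (m₁.1:ℝ) := by exact_mod_cast hcm1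
  have hcm2R : ((v₀.2:ℝ)) = (v₁.2:ℝ) + (c:ℝ) * (m₁.2:ℝ) := by exact_mod_cast hcm2
  have hge1 : 1 ≤ m₁.1 * v₁.2 - m₁.2 * v₁.1 := by
    rcases lt_or_eq_of_le hE0 with hEpos | hEzero
    · -- E > 0 : use the supporting line of the edge [v₁, v₀]
      have h1 := hsupp10 _ hv₂.1
      simp only at h1
      have h2 : (0:ℤ) ≤ (v₁.1 * v₀.2 - v₁.2 * v₀.1) *
          ((v₀.1 - v₁.1) * (v₂.2 - v₁.2) - (v₀.2 - v₁.2) * (v₂.1 - v₁.1)) := by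
        exact_mod_cast h1
      have hDzne : v₁.1 * v₀.2 - v₁.2 * v₀.1 ≠ 0 := by
        intro hz
        exact hD10ne (by exact_mod_cast congrArg (fun z : ℤ => (z:ℝ)) hz)
      have h3 : (v₀.1 - v₁.1) * (v₂.2 - v₁.2) - (v₀.2 - v₁.2) * (v₂.1 - v₁.1) =
          -(c * ((v₂.1 - v₁.1) * m₁.2 - (v₂.2 - v₁.2) * m₁.1)) := by
        rw [hcm1, hcm2]; ring
      rw [h3] at h2
      have h4 : v₁.1 * v₀.2 - v₁.2 * v₀.1 = c * (v₁.1 * m₁.2 - v₁.2 * m₁.1) := by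
        rw [hcm1, hcm2]; ring
      rw [h4] at h2
      have h5 : v₁.1 * m₁.2 - v₁.2 * m₁.1 ≠ 0 := by
        intro hz; rw [h4, hz, mul_zero] at hDzne; exact hDzne rfl
      have hk0 : v₁.1 * m₁.2 - v₁.2 * m₁.1 < 0 := by
        rcases h5.lt_or_gt with hlt | hgt
        · exact hlt
        · exfalso
          nlinarith [h2, mul_pos (mul_pos hc hgt) (mul_pos hc hEpos)]
      linarith [hk0]
    · -- E = 0 : m₁ is parallel to v₂ - v₁, contradiction with extreme points
      exfalso
      have hdet0 : (v₂ - v₁).1 * m₁.2 - (v₂ - v₁).2 * m₁.1 = 0 := by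
        rw [hsub1, hsub2]; linarith
      rcases prim_parallel (v₂ - v₁) m₁ hprim hm₁ hdet0 with hpar | hpar
      · -- m₁ = v₂ - v₁
        have hm1 : m₁.1 = v₂.1 - v₁.1 := by rw [hpar]; rfl
        have hm2 : m₁.2 = v₂.2 - v₁.2 := by rw [hpar]; rfl
        rcases (by omega : c = 1 ∨ 2 ≤ c) with hc1 | hc2
        · apply hne₀₂
          apply Prod.ext
          · rw [hcm1, hm1, hc1]; ring
          · rw [hcm2, hm2, hc1]; ring
        · have hcR2 : (2:ℝ) ≤ (c:ℝ) := by exact_mod_cast hc2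
          have hseg : ((v₂.1:ℝ), (v₂.2:ℝ)) ∈
              openSegment ℝ ((v₁.1:ℝ), (v₁.2:ℝ)) ((v₀.1:ℝ), (v₀.2:ℝ)) := by
            refine ⟨1 - 1/(c:ℝ), 1/(c:ℝ),
              by rw [sub_pos, div_lt_one (by linarith : (0:ℝ) < (c:ℝ))]; linarith,
              by positivity, by ring, ?_⟩
            have hm1R : (m₁.1:ℝ) = (v₂.1:ℝ) - (v₁.1:ℝ) := by exact_mod_cast hm1
            have hm2R : (m₁.2:ℝ) = (v₂.2:ℝ) - (v₁.2:ℝ) := by exact_mod_cast hm2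
            apply Prod.ext
            · simp only [Prod.smul_fst, Prod.fst_add, smul_eq_mul]
              rw [hcm1R, hm1R]; field_simp; ring
            · simp only [Prod.smul_snd, Prod.snd_add, smul_eq_mul]
              rw [hcm2R, hm2R]; field_simp; ring
          exact hne (hinj _ _ (hv₂.2 hv₁.1 hv₀.1 hseg))
      · -- m₁ = -(v₂ - v₁)
        have hm1 : m₁.1 = -(v₂.1 - v₁.1) := by rw [hpar]; rfl
        have hm2 : m₁.2 = -(v₂.2 - v₁.2) := by rw [hpar]; rfl
        have hm1R : (m₁.1:ℝ) = -((v₂.1:ℝ) - (v₁.1:ℝ)) := by exact_mod_cast hm1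
        have hm2R : (m₁.2:ℝ) = -((v₂.2:ℝ) - (v₁.2:ℝ)) := by exact_mod_cast hm2
        have hc1R : (0:ℝ) < (c:ℝ) + 1 := by positivity
        have hseg : ((v₁.1:ℝ), (v₁.2:ℝ)) ∈
            openSegment ℝ ((v₀.1:ℝ), (v₀.2:ℝ)) ((v₂.1:ℝ), (v₂.2:ℝ)) := by
          have hcpos : (0:ℝ) < (c:ℝ) := by exact_mod_cast hc
          refine ⟨1/((c:ℝ)+1), (c:ℝ)/((c:ℝ)+1), by positivity, by positivity,
            by field_simp; ring, ?_⟩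
          apply Prod.ext
          · simp only [Prod.smul_fst, Prod.fst_add, smul_eq_mul]
            rw [hcm1R, hm1R]; field_simp; ring
          · simp only [Prod.smul_snd, Prod.snd_add, smul_eq_mul]
            rw [hcm2R, hm2R]; field_simp; ring
        exact hne₀₁ (hinj _ _ (hv₁.2 hv₀.1 hv₂.1 hseg))
  -- upper bound via the lattice-point lemma applied to the edge [v₀, v₁]
  have hceneg : v₁ - v₀ = c • (-m₁) := by
    have h1 : v₁ - v₀ = -(v₀ - v₁) := by ring
    rw [h1, hcm, ← smul_neg]
  have hneggcd : Int.gcd (-m₁).1 (-m₁).2 = 1 := by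
    have h1 : (-m₁).1 = -m₁.1 := rfl
    have h2 : (-m₁).2 = -m₁.2 := rfl
    rw [h1, h2]
    simpa [Int.gcd, Int.natAbs_neg] using hm₁
  have hle := fano_height_le_one P hconv h0 hint v₀ v₁ hv₀.1 hv₁.1 hprim₀ hprim₁
    (-m₁) hneggcd c hc hceneg
  have hval : v₀.1 * (-m₁).2 - v₀.2 * (-m₁).1 = m₁.1 * v₁.2 - m₁.2 * v₁.1 := by
    have h1 : (-m₁).1 = -m₁.1 := rfl
    have h2 : (-m₁).2 = -m₁.2 := rfl
    rw [h1, h2, hcm1, hcm2]; ring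
  rw [hval] at hle
  have hfin : m₁.1 * v₁.2 - m₁.2 * v₁.1 = 1 := le_antisymm hle hge1
  rw [hsub1, hsub2]
  linarith [hfin]
end

section
/- Let G := −(1/3)·F where F := Σ_{k≥1} (−1)^k · (3k)!/(k·(k!)³) · z^k ∈ ℚ[[z]]. Then G satisfies (1 + 27z)·θ³G + 27z·θ²G + 6z·θG = 2z in ℚ[[z]], where θ denotes the operator G ↦ z·(dG/dz). -/
/-- The power series `F = ∑_{k ≥ 1} (-1)^k (3k)!/(k·(k!)³) zᵏ ∈ ℚ⟦z⟧`. -/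
noncomputable def Fseries : PowerSeries ℚ :=
  PowerSeries.mk fun k =>
    if k = 0 then 0
    else (-1 : ℚ) ^ k * ((3 * k).factorial : ℚ) / ((k : ℚ) * ((k.factorial : ℚ)) ^ 3)

/-- The series `G = -(1/3)·F`. -/
noncomputable def Gseries : PowerSeries ℚ := -((1 / 3 : ℚ) • Fseries)

/-- The operator `θ = z·d/dz` on `ℚ⟦z⟧`. -/
noncomputable def thetaOp (G : PowerSeries ℚ) : PowerSeries ℚ :=
  PowerSeries.X * PowerSeries.derivative ℚ G

open PowerSeries

lemma coeff_theta (G : PowerSeries ℚ) (n : ℕ) :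
    coeff n (thetaOp G) = n * coeff n G := by
  cases n with
  | zero => simp [thetaOp]
  | succ m => rw [thetaOp, coeff_succ_X_mul, coeff_derivative]; push_cast; ring

lemma coeff_G (n : ℕ) : coeff n Gseries =
    -(1/3) * (if n = 0 then 0
      else (-1 : ℚ) ^ n * ((3 * n).factorial : ℚ) / ((n : ℚ) * ((n.factorial : ℚ)) ^ 3)) := by
  rw [Gseries, map_neg, map_smul, Fseries, coeff_mk]
  split
  · simp
  · rw [smul_eq_mul]; ring

lemma key (m : ℕ) (hm : m ≠ 0) :
    ((m:ℚ)+1)^3 * coeff (m+1) Gseries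
      + (27*(m:ℚ)^3 + 27*(m:ℚ)^2 + 6*(m:ℚ)) * coeff m Gseries = 0 := by
  rw [coeff_G, coeff_G, if_neg hm, if_neg (Nat.succ_ne_zero m)]
  have h3 : (3 * (m+1)).factorial
      = (3*m+3) * ((3*m+2) * ((3*m+1) * (3*m).factorial)) := by
    have e : 3 * (m+1) = (3*m+2) + 1 := by ring
    rw [e, Nat.factorial_succ]
    have e2 : 3*m+2 = (3*m+1)+1 := by ring
    rw [e2, Nat.factorial_succ, Nat.factorial_succ]
  have h1 : (m+1).factorial = (m+1) * m.factorial := Nat.factorial_succ m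
  have hmq : (m:ℚ) ≠ 0 := Nat.cast_ne_zero.mpr hm
  have hm1 : ((m:ℚ)+1) ≠ 0 := by positivity
  have hf : ((m.factorial : ℚ)) ≠ 0 := Nat.cast_ne_zero.mpr m.factorial_ne_zero
  rw [h3, h1]
  push_cast
  rw [pow_succ]
  field_simp
  ring

/-- `G = -(1/3)·F` satisfies `(1 + 27z)·θ³G + 27z·θ²G + 6z·θG = 2z`
in `ℚ⟦z⟧`. -/
theorem statement6 :
    (1 + 27 * PowerSeries.X) * thetaOp (thetaOp (thetaOp Gseries))
      + 27 * PowerSeries.X * thetaOp (thetaOp Gseries)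
      + 6 * PowerSeries.X * thetaOp Gseries
      = 2 * PowerSeries.X := by
  have e27 : (27 : PowerSeries ℚ) = C 27 := (map_ofNat (C (R := ℚ)) 27).symm
  have e6 : (6 : PowerSeries ℚ) = C 6 := (map_ofNat (C (R := ℚ)) 6).symm
  have e2 : (2 : PowerSeries ℚ) = C 2 := (map_ofNat (C (R := ℚ)) 2).symm
  ext n
  rw [add_mul, one_mul, e27, e6, e2]
  simp only [map_add, mul_assoc, coeff_C_mul]
  cases n with
  | zero => simp [coeff_theta]
  | succ m =>
    simp only [coeff_succ_X_mul, coeff_theta, coeff_X]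
    cases m with
    | zero =>
      norm_num
      rw [coeff_G]
      norm_num [Nat.factorial]
    | succ j =>
      have hk := key (j+1) (Nat.succ_ne_zero j)
      rw [if_neg (by omega : ¬ (j + 1 + 1 = 1))]
      push_cast at hk ⊢
      linear_combination hk
end
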